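/- arXiv:2501.09132 — 7 statements merged into one kernel-verified Lean document; each statement's English description precedes it below -/
import Mathlib

section
/- Let X be a small category and F a field. The essential image of the functor rep(X, Top) → rep(X, Vect_F) given by postcomposition with degree-0 singular homology H_0(−; F) coincides with the essential image of the functor rep(X, Set) → rep(X, Vect_F) given by postcomposition with the free vector space functor. In particular, the additive images of these two functors also coincide. -/
open CategoryTheory CategoryTheory.Limits

/-- Singular homology in degree `n` with coefficients in the field `F`, as a functor
`Top ⥤ Vect_F`: the composite of the singular simplicial set functor, the objectwise free
vector space functor, the alternating face map (singular chain) complex, and homology. -/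
noncomputable def singularHomology (F : Type) [Field F] (n : ℕ) :
    TopCat.{0} ⥤ ModuleCat.{0} F :=
  TopCat.toSSet ⋙ ((SimplicialObject.whiskering _ _).obj (ModuleCat.free F)) ⋙
    AlgebraicTopology.alternatingFaceMapComplex (ModuleCat F) ⋙
    HomologicalComplex.homologyFunctor _ _ n

/-- The additive image of a functor `T` into an additive category. -/
def AdditiveImage {C : Type*} {A : Type*} [Category C] [Category A] [Preadditive A]
    [HasBinaryBiproducts A] (T : C ⥤ A) (Y : A) : Prop :=
  ∃ (Z : C) (Y' : A), Nonempty (Y ⊞ Y' ≅ T.obj Z)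

open Simplicial

namespace Stmt0Aux

def pi0Rel (K : SSet.{0}) (a b : K _⦋0⦌) : Prop :=
  ∃ p : K _⦋1⦌, K.δ 1 p = a ∧ K.δ 0 p = b

lemma pi0Rel_map {K L : SSet.{0}} (f : K ⟶ L) {a b : K _⦋0⦌} (h : pi0Rel K a b) :
    pi0Rel L (f.app _ a) (f.app _ b) := by
  obtain ⟨p, h1, h0⟩ := h
  refine ⟨f.app _ p, ?_, ?_⟩
  · rw [← h1]; exact (FunctorToTypes.naturality f (SimplexCategory.δ 1).op p).symm
  · rw [← h0]; exact (FunctorToTypes.naturality f (SimplexCategory.δ 0).op p).symm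

def Pi0 : SSet.{0} ⥤ Type 0 where
  obj K := Quot (pi0Rel K)
  map f := TypeCat.ofHom (Quot.map (f.app _) (fun _ _ h => pi0Rel_map f h))
  map_id K := by ext x; induction x using Quot.ind; rfl
  map_comp f g := by ext x; induction x using Quot.ind; rfl

variable (F : Type) [Field F]

noncomputable abbrev chains : SSet.{0} ⥤ ChainComplex (ModuleCat.{0} F) ℕ :=
  ((SimplicialObject.whiskering _ _).obj (ModuleCat.free F)) ⋙
    AlgebraicTopology.alternatingFaceMapComplex (ModuleCat F)

lemma chains_d (K : SSet.{0}) :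
    ((chains F).obj K).d 1 0 =
      ((ModuleCat.free F).map (K.δ 0) - (ModuleCat.free F).map (K.δ 1) :
        (ModuleCat.free F).obj (K _⦋1⦌) ⟶ (ModuleCat.free F).obj (K _⦋0⦌)) := by
  show ((AlgebraicTopology.alternatingFaceMapComplex (ModuleCat F)).obj
      (((SimplicialObject.whiskering _ _).obj (ModuleCat.free F)).obj K)).d (0 + 1) 0 = _
  rw [AlgebraicTopology.alternatingFaceMapComplex_obj_d,
    AlgebraicTopology.AlternatingFaceMapComplex.objD, Fin.sum_univ_two, sub_eq_add_neg]
  congr 1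
  · show (1 : ℤ) • _ = _ ; rw [one_smul]; rfl
  · show ((-1 : ℤ) ^ 1) • _ = _ ; rw [pow_one, neg_smul, one_smul]; rfl

noncomputable def toFree (K : SSet.{0}) :
    ((chains F).obj K).X 0 ⟶ (ModuleCat.free F).obj (Pi0.obj K) :=
  (ModuleCat.free F).map (TypeCat.ofHom (Quot.mk _))


lemma d_toFree (K : SSet.{0}) : ((chains F).obj K).d 1 0 ≫ toFree F K = 0 := by
  rw [chains_d]
  apply ModuleCat.free_hom_ext
  intro p
  show toFree F K ((ModuleCat.free F).map (K.δ 0) (ModuleCat.freeMk p)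
      - (ModuleCat.free F).map (K.δ 1) (ModuleCat.freeMk p)) = 0
  erw [map_sub]
  show (ModuleCat.free F).map (TypeCat.ofHom (Quot.mk _)) ((ModuleCat.free F).map (K.δ 0) (ModuleCat.freeMk p))
    - (ModuleCat.free F).map (TypeCat.ofHom (Quot.mk _)) ((ModuleCat.free F).map (K.δ 1) (ModuleCat.freeMk p)) = 0
  erw [ModuleCat.free_map_apply, ModuleCat.free_map_apply, ModuleCat.free_map_apply,
    ModuleCat.free_map_apply, sub_eq_zero]
  exact congrArg _ (Quot.sound ⟨p, rfl, rfl⟩).symm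

lemma prev0 : (ComplexShape.down ℕ).prev 0 = 1 := by
  simp [ChainComplex.prev]

lemma pOp_eq (K : SSet.{0}) {a b : K _⦋0⦌} (h : pi0Rel K a b) :
    ((chains F).obj K).pOpcycles 0 (ModuleCat.freeMk a) =
      ((chains F).obj K).pOpcycles 0 (ModuleCat.freeMk b) := by
  obtain ⟨p, rfl, rfl⟩ := h
  have hz := ((chains F).obj K).d_pOpcycles 1 0
  have := congrArg (fun (φ : ((chains F).obj K).X 1 ⟶ ((chains F).obj K).opcycles 0)
    => φ (ModuleCat.freeMk p)) hz
  rw [chains_d] at this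
  show _ = _
  have h2 : ((chains F).obj K).pOpcycles 0
      ((ModuleCat.free F).map (K.δ 0) (ModuleCat.freeMk p)
        - (ModuleCat.free F).map (K.δ 1) (ModuleCat.freeMk p)) = 0 := this
  erw [map_sub, sub_eq_zero] at h2
  rw [show (ModuleCat.freeMk (K.δ 1 p) : ((chains F).obj K).X 0)
      = (ModuleCat.free F).map (K.δ 1) (ModuleCat.freeMk p) from
      (ModuleCat.free_map_apply _ _).symm,
    show (ModuleCat.freeMk (K.δ 0 p) : ((chains F).obj K).X 0)
      = (ModuleCat.free F).map (K.δ 0) (ModuleCat.freeMk p) from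
      (ModuleCat.free_map_apply _ _).symm]
  exact h2.symm

/-- opcycles in degree 0 is the free module on π₀. -/
noncomputable def opcyclesIso (K : SSet.{0}) :
    ((chains F).obj K).opcycles 0 ≅ (ModuleCat.free F).obj (Pi0.obj K) where
  hom := ((chains F).obj K).descOpcycles (toFree F K) 1 (prev0) (d_toFree F K)
  inv := ModuleCat.freeDesc (TypeCat.ofHom (Quot.lift
    (fun x => ((chains F).obj K).pOpcycles 0 (ModuleCat.freeMk x))
    (fun _ _ h => pOp_eq F K h)))
  hom_inv_id := by
    rw [← cancel_epi (((chains F).obj K).pOpcycles 0), HomologicalComplex.p_descOpcycles_assoc,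
      Category.comp_id]
    apply ModuleCat.free_hom_ext
    intro x
    show ModuleCat.freeDesc _ (toFree F K (ModuleCat.freeMk x)) = _
    rw [show toFree F K (ModuleCat.freeMk x) = ModuleCat.freeMk (Quot.mk _ x) from
      ModuleCat.free_map_apply _ _]
    erw [ModuleCat.freeDesc_apply]
    rfl
  inv_hom_id := by
    apply ModuleCat.free_hom_ext
    intro q
    induction q using Quot.ind with
    | _ a =>
      show (((chains F).obj K).descOpcycles (toFree F K) 1 (prev0 ) (d_toFree F K))
        (ModuleCat.freeDesc _ (ModuleCat.freeMk (Quot.mk _ a))) = ModuleCat.freeMk (Quot.mk _ a)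
      erw [ModuleCat.freeDesc_apply]
      have := congrArg (fun (φ : ((chains F).obj K).X 0 ⟶ (ModuleCat.free F).obj (Pi0.obj K))
        => φ (ModuleCat.freeMk a))
        (((chains F).obj K).p_descOpcycles (toFree F K) 1 (prev0) (d_toFree F K))
      simp only at this
      rw [show ((((chains F).obj K).pOpcycles 0) ≫
        (((chains F).obj K).descOpcycles (toFree F K) 1 prev0 (d_toFree F K)))
          (ModuleCat.freeMk a)
        = (((chains F).obj K).descOpcycles (toFree F K) 1 prev0 (d_toFree F K))
          ((((chains F).obj K).pOpcycles 0) (ModuleCat.freeMk a)) from rfl] at this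
      erw [this]
      exact ModuleCat.free_map_apply _ _

noncomputable def homologyIsoFree (K : SSet.{0}) :
    ((chains F).obj K).homology 0 ≅ (ModuleCat.free F).obj (Pi0.obj K) :=
  ChainComplex.isoHomologyι₀ _ ≪≫ opcyclesIso F K



lemma chains_map_f (K L : SSet.{0}) (f : K ⟶ L) :
    ((chains F).map f).f 0 = ((ModuleCat.free F).map (f.app _) :
      (ModuleCat.free F).obj (K _⦋0⦌) ⟶ (ModuleCat.free F).obj (L _⦋0⦌)) := rfl

noncomputable def chainsH0Iso :
    chains F ⋙ HomologicalComplex.homologyFunctor _ _ 0 ≅ Pi0 ⋙ ModuleCat.free F :=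
  NatIso.ofComponents (fun K => homologyIsoFree F K) (by
    intro K L f
    show HomologicalComplex.homologyMap ((chains F).map f) 0 ≫ (homologyIsoFree F L).hom = _
    dsimp only [homologyIsoFree, Iso.trans_hom, opcyclesIso]
    rw [show (ChainComplex.isoHomologyι₀ ((chains F).obj L)).hom
      = ((chains F).obj L).homologyι 0 from rfl]
    rw [show (ChainComplex.isoHomologyι₀ ((chains F).obj K)).hom
      = ((chains F).obj K).homologyι 0 from rfl]
    rw [HomologicalComplex.homologyι_naturality_assoc]
    refine Eq.trans ?_ (Category.assoc _ _ _).symm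
    congr 1
    rw [← cancel_epi (((chains F).obj K).pOpcycles 0),
      HomologicalComplex.p_opcyclesMap_assoc, HomologicalComplex.p_descOpcycles,
      HomologicalComplex.p_descOpcycles_assoc]
    rw [chains_map_f]
    apply ModuleCat.free_hom_ext
    intro x
    show toFree F L ((ModuleCat.free F).map (f.app _) (ModuleCat.freeMk x))
      = (ModuleCat.free F).map (Pi0.map f) (toFree F K (ModuleCat.freeMk x))
    unfold toFree
    refine ((congrArg ((ModuleCat.free F).map (TypeCat.ofHom (Quot.mk (pi0Rel L))))
        (ModuleCat.free_map_apply (R := F) (f.app (Opposite.op (SimplexCategory.mk 0))) x)).trans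
      ((ModuleCat.free_map_apply (R := F) _ _).trans ?_))
    refine Eq.trans ?_ ((congrArg ((ModuleCat.free F).map (Pi0.map f))
        (ModuleCat.free_map_apply (R := F) (TypeCat.ofHom (Quot.mk (pi0Rel K))) x)).symm)
    exact (ModuleCat.free_map_apply (R := F) (Pi0.map f) (Quot.mk (pi0Rel K) x)).symm)

section Topology

open NNReal

/-- A vertex of the topological simplex. -/
noncomputable def vert (x : SimplexCategory) : SimplexCategory.toTop.{0}.obj x :=
  Classical.arbitrary _

end Topology

section Psi

noncomputable def pi0Top : TopCat.{0} ⥤ Type 0 := TopCat.toSSet ⋙ Pi0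


lemma hom_const {x : SimplexCategory} {Y : TopCat.{0}} [DiscreteTopology ↥Y]
    (p : SimplexCategory.toTop.obj x ⟶ Y) (z w : ↥(SimplexCategory.toTop.obj x)) :
    p z = p w := by
  have : IsLocallyConstant p := (IsLocallyConstant.iff_continuous _).2 p.hom.continuous
  exact this.apply_eq_of_preconnectedSpace z w

def asHom {Y : TopCat.{0}} {n : ℕ} (σ : (TopCat.toSSet.obj Y) _⦋n⦌) :
    SimplexCategory.toTop.obj (SimplexCategory.mk n) ⟶ Y := σ.down

lemma asHom_δ {Y : TopCat.{0}} (i : Fin 2) (p : (TopCat.toSSet.obj Y) _⦋1⦌) :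
    asHom ((TopCat.toSSet.obj Y).δ i p)
      = SimplexCategory.toTop.map (SimplexCategory.δ i) ≫ asHom p := rfl

lemma psi_wd (A : Type 0) {σ τ : (TopCat.toSSet.obj (TopCat.discrete.obj A)) _⦋0⦌}
    (h : pi0Rel _ σ τ) :
    asHom σ (vert _) = asHom τ (vert _) := by
  obtain ⟨p, h1, h0⟩ := h
  rw [← h1, ← h0, asHom_δ, asHom_δ]
  exact hom_const (asHom p) _ _

/-- Constant 0-simplex at `a`. -/
noncomputable def constSimplex (A : Type 0) (a : A) :
    SimplexCategory.toTop.obj (SimplexCategory.mk 0) ⟶ TopCat.discrete.obj A :=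
  TopCat.ofHom (X := SimplexCategory.toTop.obj (SimplexCategory.mk 0))
    (Y := TopCat.discrete.obj A) ⟨fun _ => a, continuous_const⟩

instance : Subsingleton ↥(SimplexCategory.toTop.obj (SimplexCategory.mk 0)) :=
  inferInstance

noncomputable def PsiApp (A : Type 0) : pi0Top.obj (TopCat.discrete.obj A) ≅ A where
  hom := TypeCat.ofHom (Quot.lift (fun σ => asHom σ (vert _)) (fun _ _ h => psi_wd A h))
  inv := TypeCat.ofHom fun a => Quot.mk _ (ULift.up (constSimplex A a))
  hom_inv_id := by
    ext q
    induction q using Quot.ind with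
    | _ σ =>
      show Quot.mk _ (ULift.up (constSimplex A (asHom σ (vert _)))) = Quot.mk _ σ
      refine congrArg _ (congrArg ULift.up ?_ |>.trans rfl)
      show constSimplex A (asHom σ (vert _)) = asHom σ
      ext z
      show asHom σ (vert _) = asHom σ z
      exact congrArg (asHom σ) (Subsingleton.elim _ _)
  inv_hom_id := by ext a; rfl

noncomputable def Psi : TopCat.discrete.{0} ⋙ pi0Top ≅ 𝟭 (Type 0) :=
  NatIso.ofComponents PsiApp (by
    intro A B f
    ext q
    induction q using Quot.ind with
    | _ σ =>
      show (PsiApp B).hom (pi0Top.map (TopCat.discrete.map f) (Quot.mk _ σ))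
        = f ((PsiApp A).hom (Quot.mk _ σ))
      rfl)

end Psi

end Stmt0Aux

open Stmt0Aux in
/-- For a small category `X` and a field `F`, the essential image of
`H₀(-, F) : rep(X, Top) ⥤ rep(X, Vect_F)` coincides with the essential image of
`free : rep(X, Set) ⥤ rep(X, Vect_F)`; in particular the additive images also coincide. -/
theorem stmt0 (X : Type) [SmallCategory X] (F : Type) [Field F] :
    (∀ R : X ⥤ ModuleCat.{0} F,
      ((Functor.whiskeringRight X TopCat.{0} (ModuleCat.{0} F)).obj (singularHomology F 0)).essImage R ↔
      ((Functor.whiskeringRight X (Type 0) (ModuleCat.{0} F)).obj (ModuleCat.free F)).essImage R) ∧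
    (∀ R : X ⥤ ModuleCat.{0} F,
      AdditiveImage ((Functor.whiskeringRight X TopCat.{0} (ModuleCat.{0} F)).obj (singularHomology F 0)) R ↔
      AdditiveImage ((Functor.whiskeringRight X (Type 0) (ModuleCat.{0} F)).obj (ModuleCat.free F)) R) := by
  have e1 : singularHomology F 0 ≅ pi0Top ⋙ ModuleCat.free F :=
    Functor.isoWhiskerLeft TopCat.toSSet (chainsH0Iso F)
  have e2 : TopCat.discrete.{0} ⋙ pi0Top ≅ 𝟭 (Type 0) := Psi
  -- the composite natural isomorphism `(S ⋙ discrete) ⋙ H₀ ≅ S ⋙ free` for `S : X ⥤ Type`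
  have big : ∀ S : X ⥤ Type 0,
      (S ⋙ TopCat.discrete) ⋙ singularHomology F 0 ≅ S ⋙ ModuleCat.free F := fun S =>
    Functor.isoWhiskerLeft (S ⋙ TopCat.discrete) e1 ≪≫
      Functor.isoWhiskerRight (Functor.isoWhiskerLeft S e2) (ModuleCat.free F) ≪≫
      Functor.isoWhiskerRight S.rightUnitor (ModuleCat.free F)
  constructor
  · intro R
    constructor
    · rintro ⟨T, ⟨i⟩⟩
      exact ⟨T ⋙ pi0Top, ⟨(Functor.isoWhiskerLeft T e1).symm ≪≫ i⟩⟩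
    · rintro ⟨S, ⟨i⟩⟩
      exact ⟨S ⋙ TopCat.discrete, ⟨big S ≪≫ i⟩⟩
  · intro R
    constructor
    · rintro ⟨T, Y', ⟨j⟩⟩
      exact ⟨T ⋙ pi0Top, Y', ⟨j ≪≫ Functor.isoWhiskerLeft T e1⟩⟩
    · rintro ⟨S, Y', ⟨j⟩⟩
      exact ⟨S ⋙ TopCat.discrete, Y', ⟨j ≪≫ (big S).symm⟩⟩
end

section
/- Let X be a finite category (finitely many objects and morphisms), F a field, and R ∈ rep(X, vect_F) a functor taking finite-dimensional values. Then R lies in the additive image of free : rep(X, Set) → rep(X, Vect_F) if and only if R lies in the additive image of free restricted to representations in finite sets; that is, R is a direct summand of free(S) for some S ∈ rep(X, Set) if and only if R is a direct summand of free(S') for some S' ∈ rep(X, Set) with S'(x) finite for every object x. -/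
open CategoryTheory CategoryTheory.Limits

noncomputable section

lemma mapDomain_val_subtypeDomain {α : Type*} {F : Type*} [Field F] (s : Set α)
    (w : α →₀ F) (h : ↑w.support ⊆ s) :
    Finsupp.mapDomain (Subtype.val : s → α) (w.subtypeDomain (· ∈ s)) = w := by
  classical
  ext a
  by_cases ha : a ∈ s
  · rw [show a = (⟨a, ha⟩ : s).val from rfl,
      Finsupp.mapDomain_apply Subtype.val_injective, Finsupp.subtypeDomain_apply]
  · rw [Finsupp.mapDomain_notin_range]
    · by_contra h0
      exact ha (h (Finsupp.mem_support_iff.mpr fun h' => h0 h'.symm))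
    · rintro ⟨⟨b, hb⟩, rfl⟩; exact ha hb

lemma exists_compl_of_isSplitMono {C : Type*} [Category C] [Abelian C] {R M : C}
    (f : R ⟶ M) [IsSplitMono f] : ∃ R' : C, Nonempty (R ⊞ R' ≅ M) :=
  ⟨cokernel f,
    ⟨(biprod.uniqueUpToIso _ _
        (isBilimitBinaryBiconeOfIsSplitMonoOfCokernel (cokernelIsCokernel f))).symm⟩⟩

/-- For a finite category `X` and a pointwise finite-dimensional representation
`R`, being a direct summand of `free(S)` for some representation `S` in sets is equivalent to
being a direct summand of `free(S')` for some representation `S'` in *finite* sets. -/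
theorem stmt2 (X : Type) [SmallCategory X] [Fintype X] [∀ a b : X, Finite (a ⟶ b)]
    (F : Type) [Field F] (R : X ⥤ ModuleCat.{0} F)
    (hR : ∀ x : X, FiniteDimensional F (R.obj x)) :
    (∃ (S : X ⥤ Type 0) (R' : X ⥤ ModuleCat.{0} F),
        Nonempty (R ⊞ R' ≅ S ⋙ ModuleCat.free F)) ↔
    (∃ S : X ⥤ Type 0, (∀ x : X, Finite (S.obj x)) ∧
        ∃ R' : X ⥤ ModuleCat.{0} F, Nonempty (R ⊞ R' ≅ S ⋙ ModuleCat.free F)) := by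
  classical
  constructor
  · rintro ⟨S, R', ⟨e⟩⟩
    set ι : R ⟶ S ⋙ ModuleCat.free F := biprod.inl ≫ e.hom with hι
    set π : S ⋙ ModuleCat.free F ⟶ R := e.inv ≫ biprod.fst with hπ
    have hιπ : ι ≫ π = 𝟙 R := by
      rw [hι, hπ, Category.assoc, Iso.hom_inv_id_assoc, biprod.inl_fst]
    -- finite spanning sets of each `R.obj x`
    have hgen : ∀ x : X, ∃ t : Finset (R.obj x),
        Submodule.span F (t : Set (R.obj x)) = ⊤ := fun x =>
      (Module.finite_def.mp (hR x))
    choose t ht using hgen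
    -- union of the supports of the images of the generators
    set T : ∀ x : X, Set (S.obj x) := fun x =>
      ⋃ v ∈ (t x : Set (R.obj x)), ((ι.app x v).support : Set (S.obj x)) with hT
    have hTfin : ∀ x, (T x).Finite := fun x =>
      Set.Finite.biUnion (t x).finite_toSet fun v _ => (ι.app x v).support.finite_toSet
    -- all images of `ι.app x` are supported on `T x`
    have hsupp : ∀ (x : X) (v : R.obj x),
        ((ι.app x v).support : Set (S.obj x)) ⊆ T x := by
      intro x v
      have : v ∈ Submodule.comap ((ι.app x).hom : R.obj x →ₗ[F] (S.obj x →₀ F)) (Finsupp.supported F F (T x)) := by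
        have hle : Submodule.span F ((t x : Set (R.obj x))) ≤
            Submodule.comap ((ι.app x).hom : R.obj x →ₗ[F] (S.obj x →₀ F)) (Finsupp.supported F F (T x)) := by
          rw [Submodule.span_le]
          intro w hw
          show ((ι.app x w).support : Set (S.obj x)) ⊆
            ⋃ v ∈ (t x : Set (R.obj x)), ((ι.app x v).support : Set (S.obj x))
          exact Set.subset_biUnion_of_mem (u := fun v => ((ι.app x v).support : Set (S.obj x))) hw
        rw [ht x] at hle
        exact hle trivial
      exact this
    -- the subfunctor generated by the `T x`
    set P : ∀ x : X, Set (S.obj x) := fun x =>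
      {s | ∃ (y : X) (f : y ⟶ x) (u : S.obj y), u ∈ T y ∧ S.map f u = s} with hP
    have hTP : ∀ x : X, T x ⊆ P x := fun x u hu =>
      ⟨x, 𝟙 x, u, hu, FunctorToTypes.map_id_apply S u⟩
    set S' : X ⥤ Type 0 :=
      { obj := fun x => ↥(P x)
        map := fun {x y} g => TypeCat.ofHom fun (s : ↥(P x)) =>
          (⟨S.map g s.1, by
            obtain ⟨z, f, u, hu, hs⟩ := s.2
            exact ⟨z, f ≫ g, u, hu, by rw [FunctorToTypes.map_comp_apply, hs]⟩⟩ : ↥(P y))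
        map_id := fun x => by
          ext s; exact FunctorToTypes.map_id_apply S s.1
        map_comp := fun {x y z} f g => by
          ext s; exact FunctorToTypes.map_comp_apply S f g s.1 } with hS'
    have hS'fin : ∀ x : X, Finite (S'.obj x) := by
      intro x
      haveI : ∀ y : X, Finite ↥(T y) := fun y => (hTfin y).to_subtype
      have hsurj : Function.Surjective
          (fun q : Σ (y : X), (y ⟶ x) × ↥(T y) =>
            (⟨S.map q.2.1 q.2.2.1, q.1, q.2.1, q.2.2.1, q.2.2.2, rfl⟩ : S'.obj x)) := by
        rintro ⟨s, y, f, u, hu, rfl⟩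
        exact ⟨⟨y, f, ⟨u, hu⟩⟩, rfl⟩
      exact Finite.of_surjective _ hsurj
    -- inclusion of `S'` into `S`
    set incl : S' ⟶ S := { app := fun x => TypeCat.ofHom Subtype.val, naturality := fun x y g => rfl }
      with hincl
    set m : S' ⋙ ModuleCat.free F ⟶ S ⋙ ModuleCat.free F :=
      Functor.whiskerRight incl (ModuleCat.free F) with hm
    have hmapp : ∀ (x : X) (w : (S' ⋙ ModuleCat.free F).obj x),
        m.app x w = Finsupp.mapDomain (Subtype.val : P x → S.obj x) w := fun x w => rfl
    have hminj : ∀ x : X, Function.Injective (m.app x) := by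
      intro x w₁ w₂ hw
      rw [hmapp, hmapp] at hw
      exact Finsupp.mapDomain_injective Subtype.val_injective hw
    -- the lift of `ι` through `m`
    have hfac : ∀ (x : X) (v : R.obj x),
        m.app x (Finsupp.subtypeDomain (· ∈ P x) (ι.app x v)) = ι.app x v := by
      intro x v
      refine (hmapp x _).trans ?_
      exact mapDomain_val_subtypeDomain (P x) (ι.app x v)
        (le_trans (hsupp x v) (hTP x))
    set ι' : R ⟶ S' ⋙ ModuleCat.free F :=
      { app := fun x => ModuleCat.ofHom ((Finsupp.lsubtypeDomain (P x)).comp (ι.app x).hom)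
        naturality := by
          intro x y g
          apply ModuleCat.hom_ext
          apply LinearMap.ext
          intro v
          show (Finsupp.subtypeDomain (· ∈ P y) (ι.app y (R.map g v)) : (S' ⋙ ModuleCat.free F).obj y) =
            (S' ⋙ ModuleCat.free F).map g (Finsupp.subtypeDomain (· ∈ P x) (ι.app x v))
          apply hminj y
          show m.app y (Finsupp.subtypeDomain (· ∈ P y) (ι.app y (R.map g v))) =
            m.app y ((S' ⋙ ModuleCat.free F).map g
              (Finsupp.subtypeDomain (· ∈ P x) (ι.app x v)))
          have hnat : ι.app y (R.map g v) = (S ⋙ ModuleCat.free F).map g (ι.app x v) :=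
            ConcreteCategory.congr_hom (ι.naturality g) v
          have hmnat : m.app y ((S' ⋙ ModuleCat.free F).map g
                (Finsupp.subtypeDomain (· ∈ P x) (ι.app x v))) =
              (S ⋙ ModuleCat.free F).map g
                (m.app x (Finsupp.subtypeDomain (· ∈ P x) (ι.app x v))) :=
            ConcreteCategory.congr_hom (m.naturality g) _
          calc m.app y (Finsupp.subtypeDomain (· ∈ P y) (ι.app y (R.map g v)))
              = ι.app y (R.map g v) := hfac y _
            _ = (S ⋙ ModuleCat.free F).map g (ι.app x v) := hnat
            _ = (S ⋙ ModuleCat.free F).map g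
                  (m.app x (Finsupp.subtypeDomain (· ∈ P x) (ι.app x v))) := by rw [hfac x]
            _ = m.app y ((S' ⋙ ModuleCat.free F).map g
                  (Finsupp.subtypeDomain (· ∈ P x) (ι.app x v))) := hmnat.symm } with hι'
    have hι'm : ι' ≫ m = ι := by
      ext x v
      exact hfac x v
    have hsplit : ι' ≫ (m ≫ π) = 𝟙 R := by
      rw [← Category.assoc, hι'm, hιπ]
    haveI : IsSplitMono ι' := IsSplitMono.mk' ⟨m ≫ π, hsplit⟩
    obtain ⟨R'', ⟨e'⟩⟩ := exists_compl_of_isSplitMono ι'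
    exact ⟨S', hS'fin, R'', ⟨e'⟩⟩
  · rintro ⟨S, _, R', h⟩
    exact ⟨S, R', h⟩

end
end

section
/- Let X be a small category and F a field. For every R ∈ rep(X, Set_*) there is an isomorphism free(forget(R)) ≅ free_*(R) ⊕ F_X in rep(X, Vect_F), where F_X is the constant representation assigning F to every object and the identity to every morphism. Consequently, the additive images of the functors free : rep(X, Set) → rep(X, Vect_F) and free_* : rep(X, Set_*) → rep(X, Vect_F) coincide. -/
open CategoryTheory CategoryTheory.Limits

/-- The reduced free vector space functor `free_* : Set_* ⥤ Vect_F`. -/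
noncomputable def freeStar (F : Type) [Field F] : Pointed.{0} ⥤ ModuleCat.{0} F where
  obj S := ModuleCat.of F ((S.X →₀ F) ⧸ Submodule.span F {Finsupp.single S.point (1 : F)})
  map {S T} f := ModuleCat.ofHom <| Submodule.mapQ _ _ (Finsupp.lmapDomain F F f.toFun)
    (by
      rw [Submodule.span_le, Set.singleton_subset_iff, SetLike.mem_coe, Submodule.mem_comap]
      simp only [Finsupp.lmapDomain_apply, Finsupp.mapDomain_single, f.map_point]
      exact Submodule.mem_span_singleton_self _)
  map_id S := by
    refine ModuleCat.hom_ext (Submodule.linearMap_qext _ ?_)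
    ext x
    dsimp
    erw [Submodule.mapQ_apply]
    simp only [Finsupp.lmapDomain_apply, Finsupp.mapDomain_id]
  map_comp {S T U} f g := by
    refine ModuleCat.hom_ext (Submodule.linearMap_qext _ ?_)
    ext x
    dsimp
    erw [Submodule.mapQ_apply]
    simp only [Finsupp.lmapDomain_apply, Finsupp.mapDomain_single, Function.comp_apply]

noncomputable section

namespace Stmt4Aux
variable (F : Type) [Field F]

def aug (A : Type) : (A →₀ F) →ₗ[F] F := Finsupp.linearCombination F (fun _ => 1)

@[simp] lemma aug_single (A : Type) (a : A) (c : F) : aug F A (Finsupp.single a c) = c := by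
  simp [aug]

lemma aug_natural {A B : Type} (f : A → B) :
    (aug F B).comp (Finsupp.lmapDomain F F f) = aug F A := by
  apply Finsupp.lhom_ext
  intro a b
  simp [aug, Finsupp.linearCombination_single]

/-- the combined map `(A →₀ F) → Q × F` for a pointed set `(A, p)` is bijective -/
def combined (A : Type) (p : A) :
    ((A →₀ F)) →ₗ[F] ((A →₀ F) ⧸ Submodule.span F {Finsupp.single p (1 : F)}) × F :=
  LinearMap.prod (Submodule.mkQ _) (aug F A)

lemma combined_bijective (A : Type) (p : A) : Function.Bijective (combined F A p) := by
  constructor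
  · rw [injective_iff_map_eq_zero]
    intro v hv
    rw [Prod.ext_iff] at hv
    obtain ⟨h1, h2⟩ := hv
    simp only [combined, LinearMap.prod_apply, Function.prod, Prod.fst_zero, Prod.snd_zero] at h1 h2
    rw [Submodule.mkQ_apply, Submodule.Quotient.mk_eq_zero, Submodule.mem_span_singleton] at h1
    obtain ⟨c, rfl⟩ := h1
    simp only [map_smul, aug_single, smul_eq_mul, mul_one] at h2
    rw [h2, zero_smul]
  · rintro ⟨q, a⟩
    obtain ⟨v, rfl⟩ := Submodule.mkQ_surjective _ q
    refine ⟨v + (a - aug F A v) • Finsupp.single p 1, ?_⟩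
    have hz : Submodule.mkQ (Submodule.span F {Finsupp.single p (1:F)})
        (Finsupp.single p (1:F)) = 0 := by
      rw [Submodule.mkQ_apply, Submodule.Quotient.mk_eq_zero]
      exact Submodule.mem_span_singleton_self _
    apply Prod.ext
    · simp only [combined, LinearMap.prod_apply, Function.prod, map_add, map_smul, hz,
        smul_zero, add_zero, Prod.fst_add, Prod.smul_fst, Prod.fst]
    · simp [combined]


variable {X : Type} [SmallCategory X]

/-- quotient nat transformation -/
def quotNT (R : X ⥤ Pointed.{0}) :
    (R ⋙ forget Pointed ⋙ ModuleCat.free F) ⟶ (R ⋙ freeStar F) where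
  app x := ModuleCat.ofHom (Submodule.mkQ _)
  naturality x y f := by
    exact ModuleCat.hom_ext (Finsupp.lhom_ext fun a b => rfl)

/-- augmentation nat transformation -/
def augNT (R : X ⥤ Pointed.{0}) :
    (R ⋙ forget Pointed ⋙ ModuleCat.free F) ⟶ (Functor.const X).obj (ModuleCat.of F F) where
  app x := ModuleCat.ofHom (aug F _)
  naturality x y f := by
    dsimp
    erw [Category.comp_id]
    exact ModuleCat.hom_ext (aug_natural F _)


def part1Iso (R : X ⥤ Pointed.{0}) :
    (R ⋙ forget Pointed ⋙ ModuleCat.free F) ≅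
      (R ⋙ freeStar F) ⊞ (Functor.const X).obj (ModuleCat.of F F) := by
  let φ := biprod.lift (quotNT F R) (augNT F R)
  haveI : ∀ x : X, IsIso (φ.app x) := by
    intro x
    let E := (evaluation X (ModuleCat.{0} F)).obj x
    haveI := preservesBinaryBiproducts_of_preservesBinaryProducts E
    have key : φ.app x ≫ (E.mapBiprod (R ⋙ freeStar F)
        ((Functor.const X).obj (ModuleCat.of F F))).hom =
        biprod.lift ((quotNT F R).app x) ((augNT F R).app x) := by
      apply biprod.hom_ext
      · simp only [Category.assoc, Functor.mapBiprod_hom, biprod.lift_fst]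
        show E.map φ ≫ E.map biprod.fst = _
        rw [← E.map_comp]
        erw [biprod.lift_fst, biprod.lift_fst]
        rfl
      · simp only [Category.assoc, Functor.mapBiprod_hom, biprod.lift_snd]
        show E.map φ ≫ E.map biprod.snd = _
        rw [← E.map_comp]
        erw [biprod.lift_snd, biprod.lift_snd]
        rfl
    have key2 : biprod.lift ((quotNT F R).app x) ((augNT F R).app x) =
        (LinearEquiv.ofBijective _
            (combined_bijective F (R.obj x).X (R.obj x).point)).toModuleIso.hom ≫
          (ModuleCat.biprodIsoProd ((R ⋙ freeStar F).obj x) (ModuleCat.of F F)).inv := by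
      apply biprod.hom_ext
      · erw [biprod.lift_fst, Category.assoc]
        erw [ModuleCat.biprodIsoProd_inv_comp_fst]
        rfl
      · erw [biprod.lift_snd, Category.assoc]
        erw [ModuleCat.biprodIsoProd_inv_comp_snd]
        rfl
    have heq : φ.app x = ((LinearEquiv.ofBijective _
            (combined_bijective F (R.obj x).X (R.obj x).point)).toModuleIso.hom ≫
          (ModuleCat.biprodIsoProd ((R ⋙ freeStar F).obj x) (ModuleCat.of F F)).inv) ≫
        (E.mapBiprod (R ⋙ freeStar F) ((Functor.const X).obj (ModuleCat.of F F))).inv := by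
      erw [← key2, ← key, Category.assoc, Iso.hom_inv_id, Category.comp_id]
    rw [heq]
    exact @IsIso.comp_isIso _ _ _ _ _ _ _ (@IsIso.comp_isIso _ _ _ _ _ _ _ (Iso.isIso_hom _) (Iso.isIso_inv _)) inferInstance
  haveI : IsIso φ := NatIso.isIso_of_isIso_app φ
  exact asIso φ


/-- add a disjoint basepoint -/
def optFunctor (S : X ⥤ Type) : X ⥤ Pointed.{0} where
  obj x := ⟨Option (S.obj x), none⟩
  map f := ⟨Option.map (S.map f), rfl⟩
  map_id x := Pointed.Hom.ext (funext fun o => by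
    cases o <;> simp [S.map_id] <;> rfl)
  map_comp f g := Pointed.Hom.ext (funext fun o => by
    cases o <;> simp [S.map_comp] <;> rfl)

lemma spanLeKer (A : Type) :
    Submodule.span F {Finsupp.single (none : Option A) (1:F)} ≤
      LinearMap.ker ((Finsupp.lsum F) fun o =>
        Option.elim o (0 : F →ₗ[F] (A →₀ F)) Finsupp.lsingle) := by
  rw [Submodule.span_le, Set.singleton_subset_iff, SetLike.mem_coe, LinearMap.mem_ker,
    Finsupp.lsum_single]
  rfl

def optIsoApp (A : Type) :
    (ModuleCat.free F).obj A ≅ (freeStar F).obj ⟨Option A, none⟩ where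
  hom := ModuleCat.ofHom ((Submodule.mkQ _).comp (Finsupp.lmapDomain F F some))
  inv := ModuleCat.ofHom (Submodule.liftQ _ _ (spanLeKer F A))
  hom_inv_id := by
    refine ModuleCat.hom_ext (Finsupp.lhom_ext fun a b => ?_)
    show Submodule.liftQ _ _ (spanLeKer F A)
        (Submodule.mkQ _ ((Finsupp.lmapDomain F F some) (Finsupp.single a b)))
      = Finsupp.single a b
    rw [Finsupp.lmapDomain_apply, Finsupp.mapDomain_single, Submodule.mkQ_apply,
      Submodule.liftQ_apply, Finsupp.lsum_single]
    rfl
  inv_hom_id := by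
    refine ModuleCat.hom_ext (Submodule.linearMap_qext _ (Finsupp.lhom_ext fun o b => ?_))
    show (Submodule.mkQ _).comp (Finsupp.lmapDomain F F some)
        (Submodule.liftQ _ _ (spanLeKer F A)
          (Submodule.mkQ _ (Finsupp.single o b)))
      = Submodule.mkQ _ (Finsupp.single o b)
    rw [Submodule.mkQ_apply, Submodule.liftQ_apply, Finsupp.lsum_single]
    cases o with
    | none =>
      have h0 : (Finsupp.single (none : Option A) b)
          ∈ Submodule.span F {Finsupp.single (none : Option A) (1:F)} := by
        rw [Submodule.mem_span_singleton]
        exact ⟨b, by rw [Finsupp.smul_single, smul_eq_mul, mul_one]⟩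
      show (Submodule.mkQ _).comp (Finsupp.lmapDomain F F some) ((0 : F →ₗ[F] (A →₀ F)) b) = _
      rw [LinearMap.zero_apply, map_zero]
      exact ((Submodule.Quotient.mk_eq_zero _).mpr h0).symm
    | some a =>
      show (Submodule.mkQ _) ((Finsupp.lmapDomain F F some) (Finsupp.single a b)) = _
      rw [Finsupp.lmapDomain_apply, Finsupp.mapDomain_single]
      rfl

def part2Iso (S : X ⥤ Type) :
    (S ⋙ ModuleCat.free F) ≅ (optFunctor S ⋙ freeStar F) :=
  NatIso.ofComponents (fun x => optIsoApp F (S.obj x))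
    (fun {x y} f => ModuleCat.hom_ext <| Finsupp.lhom_ext fun a b => by
      show Submodule.Quotient.mk
          (Finsupp.mapDomain some (Finsupp.mapDomain (S.map f) (Finsupp.single a b)))
        = Submodule.Quotient.mk
          (Finsupp.mapDomain (Option.map (S.map f))
            (Finsupp.mapDomain some (Finsupp.single a b)))
      rw [Finsupp.mapDomain_single, Finsupp.mapDomain_single, Finsupp.mapDomain_single,
        Finsupp.mapDomain_single]
      rfl)

end Stmt4Aux

end

/-- For every representation `R` of `X` in pointed sets,
`free(forget R) ≅ free_*(R) ⊞ F_X` where `F_X` is the constant representation with value `F`;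
consequently the additive images of `free` and `free_*` coincide. -/
theorem stmt4 (X : Type) [SmallCategory X] (F : Type) [Field F] :
    (∀ R : X ⥤ Pointed.{0},
      Nonempty ((R ⋙ forget Pointed ⋙ ModuleCat.free F) ≅
        (R ⋙ freeStar F) ⊞ (Functor.const X).obj (ModuleCat.of F F))) ∧
    (∀ M : X ⥤ ModuleCat.{0} F,
      AdditiveImage ((Functor.whiskeringRight X (Type 0) (ModuleCat.{0} F)).obj (ModuleCat.free F)) M ↔
      AdditiveImage ((Functor.whiskeringRight X Pointed.{0} (ModuleCat.{0} F)).obj (freeStar F)) M) := by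
  constructor
  · intro R
    exact ⟨Stmt4Aux.part1Iso F R⟩
  · intro M
    constructor
    · rintro ⟨S, Y', ⟨i⟩⟩
      exact ⟨Stmt4Aux.optFunctor S, Y', ⟨i ≪≫ Stmt4Aux.part2Iso F S⟩⟩
    · rintro ⟨R, Y', ⟨i⟩⟩
      exact ⟨R ⋙ forget Pointed, Y' ⊞ (Functor.const X).obj (ModuleCat.of F F),
        ⟨(biprod.associator M Y' _).symm ≪≫ biprod.mapIso i (Iso.refl _) ≪≫
          (Stmt4Aux.part1Iso F R).symm⟩⟩
end

section
/- Let F be a finite field and X a small category. Every R ∈ rep(X, Vect_F) admitting a near-multiplicative basis — a choice of basis B(x) of R(x) for every object x such that for every morphism f : x → y and every b ∈ B(x), R(f)(b) is a scalar multiple (possibly zero) of an element of B(y) — lies in the additive image of free : rep(X, Set) → rep(X, Vect_F). -/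
open CategoryTheory CategoryTheory.Limits

set_option linter.unusedSectionVars false

noncomputable section Stmt9Aux

variable {X : Type} [SmallCategory X] {F : Type} [Field F] [Fintype F]
  (R : X ⥤ ModuleCat.{0} F) (B : ∀ x : X, Set (R.obj x))

/-- The set of scalar multiples of elements of `B x`. -/
abbrev ZSet (x : X) : Type := {v : R.obj x // ∃ b ∈ B x, ∃ lam : F, v = lam • b}

/-- Constructor for `ZSet`. -/
def zmk (x : X) (b : R.obj x) (hb : b ∈ B x) (lam : F) : ZSet R B x :=
  ⟨lam • b, b, hb, lam, rfl⟩

lemma zmk_congr {x : X} {b b' : R.obj x} {hb : b ∈ B x} {hb' : b' ∈ B x} {lam lam' : F}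
    (h : lam • b = lam' • b') : zmk R B x b hb lam = zmk R B x b' hb' lam' :=
  Subtype.ext h

variable (hmap : ∀ (x y : X) (f : x ⟶ y), ∀ b ∈ B x,
      ∃ b' ∈ B y, ∃ lam : F, R.map f b = lam • b')

/-- The `Set`-valued subrepresentation of scalar multiples of basis vectors. -/
abbrev Zfun : X ⥤ Type 0 where
  obj x := ZSet R B x
  map {x y} g := TypeCat.ofHom fun v => ⟨R.map g v.1, by
    obtain ⟨b, hb, lam, hv⟩ := v.2
    obtain ⟨b', hb', mu, h'⟩ := hmap x y g b hb
    exact ⟨b', hb', lam * mu, by rw [hv, map_smul, h', smul_smul]⟩⟩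
  map_id x := by ext v; simp
  map_comp {x y z} g h := by ext v; simp

lemma Zfun_map_zmk {x y : X} (g : x ⟶ y) {b : R.obj x} {hb : b ∈ B x}
    {b' : R.obj y} {hb' : b' ∈ B y} {mu : F} (hmu : R.map g b = mu • b') (lam : F) :
    (Zfun R B hmap).map g (zmk R B x b hb lam) = zmk R B y b' hb' (lam * mu) := by
  apply Subtype.ext
  show R.map g (lam • b) = (lam * mu) • b'
  rw [map_smul, hmu, smul_smul]

/-- `free(Z)`. -/
abbrev Efun : X ⥤ ModuleCat.{0} F := Zfun R B hmap ⋙ ModuleCat.free F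

/-- The evaluation map `free(Z) ⟶ R`. -/
def piT : Efun R B hmap ⟶ R where
  app x := ModuleCat.freeDesc (TypeCat.ofHom fun v : ZSet R B x => v.1)
  naturality {x y} g := by
    apply ModuleCat.free_hom_ext
    intro v
    show (ModuleCat.freeDesc (TypeCat.ofHom fun v : ZSet R B y => v.1))
        ((ModuleCat.free F).map ((Zfun R B hmap).map g) (ModuleCat.freeMk v))
      = R.map g ((ModuleCat.freeDesc (TypeCat.ofHom fun v : ZSet R B x => v.1)) (ModuleCat.freeMk v))
    erw [ModuleCat.free_map_apply, ModuleCat.freeDesc_apply, ModuleCat.freeDesc_apply]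
    rfl

lemma piT_freeMk {x : X} (v : ZSet R B x) :
    (piT R B hmap).app x (ModuleCat.freeMk v) = v.1 :=
  ModuleCat.freeDesc_apply _ _

/-- The image of a basis vector under the natural section. -/
def sElt (x : X) (b : R.obj x) (hb : b ∈ B x) : (Efun R B hmap).obj x :=
  -∑ lam : F, lam⁻¹ • (ModuleCat.freeMk (zmk R B x b hb lam)
      - ModuleCat.freeMk (zmk R B x b hb 0))

lemma sum_inv_mul_self : ∑ lam : F, lam⁻¹ * lam = -1 := by
  classical
  rw [← Finset.add_sum_erase _ _ (Finset.mem_univ (0:F)),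
    Finset.sum_congr rfl (fun lam hlam => inv_mul_cancel₀ (Finset.ne_of_mem_erase hlam)),
    Finset.sum_const, Finset.card_erase_of_mem (Finset.mem_univ _), Finset.card_univ,
    nsmul_eq_mul, mul_one, Nat.cast_sub Fintype.card_pos, FiniteField.cast_card_eq_zero]
  simp

lemma piT_sElt (x : X) (b : R.obj x) (hb : b ∈ B x) :
    (piT R B hmap).app x (sElt R B hmap x b hb) = b := by
  unfold sElt
  rw [map_neg, map_sum]
  have key : ∀ lam : F, (piT R B hmap).app x
      (lam⁻¹ • (ModuleCat.freeMk (zmk R B x b hb lam)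
        - ModuleCat.freeMk (zmk R B x b hb 0))) = (lam⁻¹ * lam) • b := by
    intro lam
    rw [map_smul, map_sub, piT_freeMk, piT_freeMk]
    show lam⁻¹ • ((lam • b) - ((0:F) • b)) = (lam⁻¹ * lam) • b
    rw [zero_smul, sub_zero, smul_smul]
  rw [Finset.sum_congr rfl fun lam _ => key lam, ← Finset.sum_smul, sum_inv_mul_self]
  simp

variable (hB : ∀ x : X, LinearIndependent F ((↑) : B x → R.obj x) ∧ Submodule.span F (B x) = ⊤)

/-- The basis of `R x` given by `B x`. -/
def bas (x : X) : Module.Basis (B x) F (R.obj x) :=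
  Module.Basis.mk (hB x).1 (by rw [Subtype.range_coe]; exact (hB x).2.ge)

lemma bas_apply (x : X) (b : R.obj x) (hb : b ∈ B x) : bas R B hB x ⟨b, hb⟩ = b :=
  Module.Basis.mk_apply _ _ _

lemma smul_sElt (x : X) (b : R.obj x) (hb : b ∈ B x) (mu : F) :
    mu • sElt R B hmap x b hb
      = -∑ lam : F, lam⁻¹ • (ModuleCat.freeMk (zmk R B x b hb (lam * mu))
          - ModuleCat.freeMk (zmk R B x b hb 0)) := by
  by_cases hmu : mu = 0
  · subst hmu
    have h0 : ∀ lam : F, zmk R B x b hb (lam * 0) = zmk R B x b hb 0 := fun lam =>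
      zmk_congr R B (by rw [mul_zero])
    simp [sElt, h0]
  · unfold sElt
    rw [smul_neg, Finset.smul_sum]
    congr 1
    refine Fintype.sum_equiv (Equiv.mulRight₀ mu⁻¹ (inv_ne_zero hmu)) _ _ fun lam => ?_
    have h1 : (lam * mu⁻¹)⁻¹ = mu * lam⁻¹ := by rw [mul_inv, inv_inv, mul_comm]
    have h2 : zmk R B x b hb (lam * mu⁻¹ * mu) = zmk R B x b hb lam :=
      zmk_congr R B (by rw [mul_assoc, inv_mul_cancel₀ hmu, mul_one])
    rw [Equiv.mulRight₀_apply, h2, h1, mul_smul]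

/-- The natural section `R ⟶ free(Z)`. -/
def sT : R ⟶ Efun R B hmap where
  app x := ModuleCat.ofHom ((bas R B hB x).constr F (fun i : B x => sElt R B hmap x i.1 i.2))
  naturality {x y} g := by
    apply ModuleCat.hom_ext
    refine Module.Basis.ext (bas R B hB x) fun i => ?_
    obtain ⟨b, hb⟩ := i
    show ((bas R B hB y).constr F _) (R.map g ((bas R B hB x) ⟨b, hb⟩))
      = (Efun R B hmap).map g (((bas R B hB x).constr F _) ((bas R B hB x) ⟨b, hb⟩))
    rw [Module.Basis.constr_basis, bas_apply]
    obtain ⟨b', hb', mu, hmu⟩ := hmap x y g b hb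
    rw [hmu, map_smul]
    have hb'app : ((bas R B hB y).constr F
        (fun i : B y => sElt R B hmap y i.1 i.2)) b' = sElt R B hmap y b' hb' := by
      conv_lhs => rw [show b' = bas R B hB y ⟨b', hb'⟩ from (bas_apply R B hB y b' hb').symm]
      exact Module.Basis.constr_basis _ _ _ _
    rw [hb'app, smul_sElt]
    unfold sElt
    rw [map_neg, map_sum]
    congr 1
    refine Finset.sum_congr rfl fun lam _ => ?_
    rw [map_smul, map_sub]
    show _ = lam⁻¹ • ((ModuleCat.free F).map ((Zfun R B hmap).map g) _
      - (ModuleCat.free F).map ((Zfun R B hmap).map g) _)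
    rw [ModuleCat.free_map_apply, ModuleCat.free_map_apply,
      Zfun_map_zmk R B hmap g (hb' := hb') hmu, Zfun_map_zmk R B hmap g (hb' := hb') hmu]
    rw [show zmk R B y b' hb' (0 * mu) = zmk R B y b' hb' 0 from
      zmk_congr R B (by rw [zero_mul])]

lemma sT_piT : sT R B hmap hB ≫ piT R B hmap = 𝟙 R := by
  ext x : 2
  apply ModuleCat.hom_ext
  refine Module.Basis.ext (bas R B hB x) fun i => ?_
  obtain ⟨b, hb⟩ := i
  show (piT R B hmap).app x (((bas R B hB x).constr F _) ((bas R B hB x) ⟨b, hb⟩))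
    = 𝟙 (R.obj x) ((bas R B hB x) ⟨b, hb⟩)
  rw [Module.Basis.constr_basis, piT_sElt, bas_apply]
  rfl

end Stmt9Aux

/-- Splitting a split epi in an abelian category as a biproduct. -/
noncomputable def splittingIso {A : Type*} [Category A] [Abelian A] {E Rr : A}
    (s : Rr ⟶ E) (p : E ⟶ Rr) (hsp : s ≫ p = 𝟙 Rr) :
    Rr ⊞ kernel p ≅ E where
  hom := biprod.desc s (kernel.ι p)
  inv := biprod.lift p (kernel.lift p (𝟙 E - p ≫ s)
    (by rw [Preadditive.sub_comp, Category.id_comp, Category.assoc, hsp, Category.comp_id,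
      sub_self]))
  hom_inv_id := by
    apply biprod.hom_ext' <;> apply biprod.hom_ext
    · simp [reassoc_of% hsp, hsp]
    · rw [← cancel_mono (kernel.ι p)]
      simp [reassoc_of% hsp, hsp]
    · simp
    · rw [← cancel_mono (kernel.ι p)]
      simp
  inv_hom_id := by
    rw [biprod.lift_desc, kernel.lift_ι, add_sub_cancel]

/-- Over a finite field, every representation admitting a near-multiplicative
basis (every structure map sends every basis vector to a scalar multiple, possibly zero, of a
basis vector) lies in the additive image of `free : rep(X, Set) ⥤ rep(X, Vect_F)`. -/
theorem stmt9 (X : Type) [SmallCategory X] (F : Type) [Field F] [Finite F]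
    (R : X ⥤ ModuleCat.{0} F)
    (B : ∀ x : X, Set (R.obj x))
    (hB : ∀ x : X, LinearIndependent F ((↑) : B x → R.obj x) ∧ Submodule.span F (B x) = ⊤)
    (hmap : ∀ (x y : X) (f : x ⟶ y), ∀ b ∈ B x,
      ∃ b' ∈ B y, ∃ lam : F, R.map f b = lam • b') :
    AdditiveImage ((Functor.whiskeringRight X (Type 0) (ModuleCat.{0} F)).obj (ModuleCat.free F)) R := by
  haveI := Fintype.ofFinite F
  exact ⟨Zfun R B hmap, kernel (piT R B hmap),
    ⟨splittingIso (sT R B hmap hB) (piT R B hmap) (sT_piT R B hmap hB)⟩⟩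
end

section
/- Let F be a field and ζ ∈ F a primitive n-th root of unity (an element of multiplicative order exactly n). Then: (1) the n × n matrix Z = (ζ^{ij})_{i,j = 0,…,n−1} is invertible; and (2) for every x ∈ F with xⁿ = 1, the matrix Z · diag(1, x, x², …, x^{n−1}) · Z⁻¹ is a permutation matrix. -/
open Matrix
open Fin.NatCast

/-- For a primitive `n`-th root of unity `ζ` in a field `F` (an element of
multiplicative order exactly `n`), the Vandermonde-type matrix `Z = (ζ^{ij})` is invertible,
and for every `x` with `xⁿ = 1` the conjugate `Z · diag(1, x, …, x^{n-1}) · Z⁻¹` is a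
permutation matrix. -/
theorem stmt10 (F : Type) [Field F] (n : ℕ) (hn : 0 < n) (ζ : F) (hζ : orderOf ζ = n) :
    IsUnit (Matrix.of fun i j : Fin n => ζ ^ ((i : ℕ) * (j : ℕ))) ∧
    ∀ x : F, x ^ n = 1 →
      ∃ σ : Equiv.Perm (Fin n),
        (Matrix.of fun i j : Fin n => ζ ^ ((i : ℕ) * (j : ℕ))) *
            Matrix.diagonal (fun i : Fin n => x ^ (i : ℕ)) *
            (Matrix.of fun i j : Fin n => ζ ^ ((i : ℕ) * (j : ℕ)))⁻¹ =
          σ.permMatrix F := by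
  set Z : Matrix (Fin n) (Fin n) F := Matrix.of fun i j : Fin n => ζ ^ ((i : ℕ) * (j : ℕ)) with hZ
  have hprim : IsPrimitiveRoot ζ n := by
    have := IsPrimitiveRoot.orderOf ζ
    rwa [hζ] at this
  have hvand : Z = Matrix.vandermonde (fun i : Fin n => ζ ^ (i : ℕ)) := by
    ext i j
    simp [hZ, Matrix.vandermonde, ← pow_mul]
  have hdet : Z.det ≠ 0 := by
    rw [hvand, Matrix.det_vandermonde_ne_zero_iff]
    intro i j h
    exact Fin.ext (pow_injOn_Iio_orderOf (by simp [hζ, i.isLt]) (by simp [hζ, j.isLt]) h)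
  have hU : IsUnit Z := (Matrix.isUnit_iff_isUnit_det Z).2 (isUnit_iff_ne_zero.2 hdet)
  refine ⟨hU, fun x hx => ?_⟩
  have : NeZero n := ⟨hn.ne'⟩
  obtain ⟨k, hk, rfl⟩ := hprim.eq_pow_of_pow_eq_one hx
  refine ⟨Equiv.addRight (↑k : Fin n), ?_⟩
  have key : Z * Matrix.diagonal (fun i : Fin n => (ζ ^ k) ^ (i : ℕ))
      = (Equiv.addRight (↑k : Fin n)).permMatrix F * Z := by
    rw [Equiv.Perm.permMatrix, PEquiv.toMatrix_toPEquiv_mul]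
    ext i j
    simp only [Matrix.mul_diagonal, Matrix.submatrix_apply, id_eq, hZ, Matrix.of_apply,
      Equiv.coe_addRight]
    rw [← pow_mul, ← pow_add, ← pow_mod_orderOf ζ ((i : ℕ) * (j : ℕ) + k * (j : ℕ)),
      ← pow_mod_orderOf ζ ((((i + (↑k : Fin n)) : Fin n) : ℕ) * (j : ℕ)), hζ]
    congr 1
    have h1 : (((i + (↑k : Fin n)) : Fin n) : ℕ) ≡ (i : ℕ) + k [MOD n] := by
      rw [Fin.add_def]
      simp only [Fin.val_natCast]
      calc ((i : ℕ) + k % n) % n ≡ (i : ℕ) + k % n [MOD n] := Nat.mod_modEq _ n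
        _ ≡ (i : ℕ) + k [MOD n] := Nat.ModEq.add_left _ (Nat.mod_modEq k n)
    calc (i : ℕ) * j + k * j = ((i : ℕ) + k) * j := by ring
      _ ≡ (((i + (↑k : Fin n)) : Fin n) : ℕ) * j [MOD n] := Nat.ModEq.mul_right _ h1.symm
  rw [key, Matrix.mul_assoc, Matrix.mul_nonsing_inv _ (isUnit_iff_ne_zero.2 hdet), Matrix.mul_one]
end

section
/- Let F be a field, X a small category, S a full subcategory of X, and Lan : rep(S, Vect_F) → rep(X, Vect_F) the (pointwise) left Kan extension along the inclusion S ↪ X. A representation R ∈ rep(S, Vect_F) lies in the additive image of free : rep(S, Set) → rep(S, Vect_F) if and only if Lan(R) lies in the additive image of free : rep(X, Set) → rep(X, Vect_F). -/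
open CategoryTheory CategoryTheory.Limits

/-- For a full subcategory inclusion `ι : S ⥤ X` and the left Kan extension
`Lan : rep(S, Vect_F) ⥤ rep(X, Vect_F)` along `ι`, a representation `R` of `S` lies in the
additive image of `free` over `S` iff `Lan(R)` lies in the additive image of `free` over
`X`. -/
theorem stmt11 (S X : Type) [SmallCategory S] [SmallCategory X]
    (ι : S ⥤ X) [ι.Full] [ι.Faithful]
    (F : Type) [Field F] (R : S ⥤ ModuleCat.{0} F) :
    AdditiveImage ((Functor.whiskeringRight S (Type 0) (ModuleCat.{0} F)).obj (ModuleCat.free F)) R ↔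
    AdditiveImage ((Functor.whiskeringRight X (Type 0) (ModuleCat.{0} F)).obj (ModuleCat.free F))
      (ι.lan.obj R) := by
  -- notation
  set L : (S ⥤ ModuleCat.{0} F) ⥤ (X ⥤ ModuleCat.{0} F) := ι.lan with hL
  let freeS := (Functor.whiskeringRight S (Type 0) (ModuleCat.{0} F)).obj (ModuleCat.free F)
  let freeX := (Functor.whiskeringRight X (Type 0) (ModuleCat.{0} F)).obj (ModuleCat.free F)
  let res : (X ⥤ ModuleCat.{0} F) ⥤ (S ⥤ ModuleCat.{0} F) :=
    (Functor.whiskeringLeft S X (ModuleCat.{0} F)).obj ι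
  -- adjunctions
  let adjV : L ⊣ res := ι.lanAdjunction (ModuleCat.{0} F)
  let adjT : (Functor.lan ι : (S ⥤ Type 0) ⥤ (X ⥤ Type 0)) ⊣ _ := ι.lanAdjunction (Type 0)
  let adjF := ModuleCat.adj F
  let A := (Adjunction.whiskerRight S adjF).comp adjV
  let B := adjT.comp (Adjunction.whiskerRight X adjF)
  -- instances for L
  have hLA : L.IsLeftAdjoint := ⟨_, ⟨adjV⟩⟩
  have hLC : PreservesColimitsOfSize.{0,0} L := adjV.leftAdjoint_preservesColimits
  have hLB : PreservesBinaryBiproducts L :=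
    preservesBinaryBiproducts_of_preservesBinaryCoproducts L
  -- instances for res
  have hRA : res.IsLeftAdjoint := ⟨_, ⟨ι.ranAdjunction (ModuleCat.{0} F)⟩⟩
  have hRC : PreservesColimitsOfSize.{0,0} res := (ι.ranAdjunction (ModuleCat.{0} F)).leftAdjoint_preservesColimits
  have hRB : PreservesBinaryBiproducts res :=
    preservesBinaryBiproducts_of_preservesBinaryCoproducts res
  -- the commutation iso
  let comm : freeS ⋙ L ≅ (Functor.lan ι : (S ⥤ Type 0) ⥤ (X ⥤ Type 0)) ⋙ freeX :=
    A.leftAdjointUniq B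
  constructor
  · rintro ⟨Z, Y', ⟨e⟩⟩
    refine ⟨(Functor.lan ι).obj Z, L.obj Y', ⟨?_⟩⟩
    exact (L.mapBiprod R Y').symm ≪≫ L.mapIso e ≪≫ comm.app Z
  · rintro ⟨Z, Y', ⟨e⟩⟩
    refine ⟨ι ⋙ Z, res.obj Y', ⟨?_⟩⟩
    have : IsIso (adjV.unit.app R) := inferInstance
    exact biprod.mapIso (asIso (adjV.unit.app R)) (Iso.refl _) ≪≫
      (res.mapBiprod _ _).symm ≪≫ res.mapIso e ≪≫ Iso.refl _
end

section
/- Let F be a field and M a finite monoid, regarded as a category with a single object. If every indecomposable finite-dimensional representation of this category in Vect_F that is a direct summand of free(N) for some representation N in sets is an indicator representation (i.e., is either zero or is the one-dimensional representation on which every element of M acts as the identity), then M is the trivial monoid {1}. Equivalently, if M has an element different from the identity, then some indecomposable direct summand of the linearization free(M), where M acts on the set M by left multiplication, is not an indicator representation. -/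
open CategoryTheory CategoryTheory.Limits


namespace Stmt15Aux

variable (M : Type) [Monoid M]

/-- The regular representation of `M` on itself in `Type`. -/
def reg : SingleObj M ⥤ Type 0 where
  obj _ := M
  map m := TypeCat.ofHom (fun n : M => (m : M) * n)
  map_id x := by ext n; simp [SingleObj.id_as_one]
  map_comp f g := by ext n; simp [SingleObj.comp_as_mul, mul_assoc]

end Stmt15Aux

namespace Stmt15Aux

variable {M : Type} [Monoid M] {F : Type} [Field F]

abbrev pt : SingleObj M := SingleObj.star M

theorem map_eq_id_of_iso_const (R : SingleObj M ⥤ ModuleCat.{0} F)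
    (e : R ≅ (Functor.const (SingleObj M)).obj (ModuleCat.of F F)) (m : M) :
    R.map (SingleObj.toEnd M m) = 𝟙 _ := by
  have hn := e.hom.naturality (SingleObj.toEnd M m)
  simp only [Functor.const_obj_map, Category.comp_id] at hn
  calc R.map (SingleObj.toEnd M m)
      = (R.map (SingleObj.toEnd M m) ≫ e.hom.app pt) ≫ e.inv.app pt := by
        rw [Category.assoc, Iso.hom_inv_id_app, Category.comp_id]
    _ = 𝟙 _ := by rw [hn]; simp

theorem biprod_map_eq_id (Y Z : SingleObj M ⥤ ModuleCat.{0} F) (m : M)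
    (hY : Y.map (SingleObj.toEnd M m) = 𝟙 _) (hZ : Z.map (SingleObj.toEnd M m) = 𝟙 _) :
    (Y ⊞ Z).map (SingleObj.toEnd M m) = 𝟙 _ := by
  haveI : PreservesBinaryBiproducts ((evaluation (SingleObj M) (ModuleCat.{0} F)).obj pt) :=
    preservesBinaryBiproducts_of_preservesBiproducts _
  rw [← cancel_mono (Functor.mapBiprod ((evaluation (SingleObj M) (ModuleCat.{0} F)).obj pt) Y Z).hom,
    Functor.mapBiprod_hom]
  apply biprod.hom_ext
  · simp only [Category.assoc, biprod.lift_fst, Category.id_comp]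
    have := (biprod.fst : Y ⊞ Z ⟶ Y).naturality (SingleObj.toEnd M m)
    simp only [hY, Category.comp_id] at this
    simpa using this
  · simp only [Category.assoc, biprod.lift_snd, Category.id_comp]
    have := (biprod.snd : Y ⊞ Z ⟶ Z).naturality (SingleObj.toEnd M m)
    simp only [hZ, Category.comp_id] at this
    simpa using this

end Stmt15Aux


open CategoryTheory CategoryTheory.Limits

namespace Stmt15Aux

variable {M : Type} [Monoid M] {F : Type} [Field F]



theorem key (h : ∀ R : SingleObj M ⥤ ModuleCat.{0} F,
      (∀ x, FiniteDimensional F (R.obj x)) →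
      CategoryTheory.Indecomposable R →
      (∃ (N : SingleObj M ⥤ Type 0) (R' : SingleObj M ⥤ ModuleCat.{0} F),
        Nonempty (R ⊞ R' ≅ N ⋙ ModuleCat.free F)) →
      (IsZero R ∨
        Nonempty (R ≅ (Functor.const (SingleObj M)).obj (ModuleCat.of F F)))) :
    ∀ (n : ℕ) (R : SingleObj M ⥤ ModuleCat.{0} F)
      (_ : FiniteDimensional F (R.obj pt))
      (_ : Module.finrank F (R.obj pt) ≤ n)
      (_ : ∃ (N : SingleObj M ⥤ Type 0) (R' : SingleObj M ⥤ ModuleCat.{0} F),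
        Nonempty (R ⊞ R' ≅ N ⋙ ModuleCat.free F))
      (m : M), R.map (SingleObj.toEnd M m) = 𝟙 _ := by
  intro n
  induction n with
  | zero =>
    intro R hfd hle hw m
    have hsub : Subsingleton (R.obj pt) :=
      Module.finrank_zero_iff.mp (Nat.le_zero.mp hle)
    exact ((ModuleCat.isZero_of_subsingleton (R.obj pt)).eq_of_src _ _)
  | succ n ih =>
    intro R hfd hle hw m
    have hfd' : ∀ x : SingleObj M, FiniteDimensional F (R.obj x) := by
      intro x; obtain ⟨⟩ := x; exact hfd
    by_cases hz : IsZero R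
    · exact ((Functor.isZero_iff R).1 hz pt).eq_of_src _ _
    by_cases hind : Indecomposable R
    · rcases h R hfd' hind hw with hz' | he
      · exact ((Functor.isZero_iff R).1 hz' pt).eq_of_src _ _
      · obtain ⟨e⟩ := he
        have hn := e.hom.naturality (SingleObj.toEnd M m)
        simp only [Functor.const_obj_map, Category.comp_id] at hn
        calc R.map (SingleObj.toEnd M m)
            = (R.map (SingleObj.toEnd M m) ≫ e.hom.app pt) ≫ e.inv.app pt := by
              rw [Category.assoc, Iso.hom_inv_id_app, Category.comp_id]
          _ = 𝟙 _ := by rw [hn]; simp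
    · rw [Indecomposable] at hind
      push_neg at hind
      obtain ⟨Y, Z, e, hYnz, hZnz⟩ := hind hz
      -- finite dimensionality of the summands
      have split : ∀ (W : SingleObj M ⥤ ModuleCat.{0} F)
          (i : W ⟶ Y ⊞ Z) (p : Y ⊞ Z ⟶ W), i ≫ p = 𝟙 W →
          FiniteDimensional F (W.obj pt) := by
        intro W i p hip
        have hfg : (i.app pt ≫ e.inv.app pt) ≫ (e.hom.app pt ≫ p.app pt) = 𝟙 _ := by
          rw [Category.assoc, ← Category.assoc (e.inv.app pt), Iso.inv_hom_id_app,
            Category.id_comp, ← NatTrans.comp_app, hip, NatTrans.id_app]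
        have hinv : ∀ v, (e.hom.app pt ≫ p.app pt) ((i.app pt ≫ e.inv.app pt) v) = v :=
          fun v => by have := ConcreteCategory.congr_hom hfg v; exact this
        exact FiniteDimensional.of_injective
          ((i.app pt ≫ e.inv.app pt).hom : W.obj pt →ₗ[F] R.obj pt)
          (Function.LeftInverse.injective hinv)
      have hfdY : FiniteDimensional F (Y.obj pt) :=
        split Y biprod.inl biprod.fst biprod.inl_fst
      have hfdZ : FiniteDimensional F (Z.obj pt) :=
        split Z biprod.inr biprod.snd biprod.inr_snd
      -- rank additivity
      haveI : PreservesBinaryBiproducts ((evaluation (SingleObj M) (ModuleCat.{0} F)).obj pt) :=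
        preservesBinaryBiproducts_of_preservesBiproducts _
      have eq1 : Module.finrank F (R.obj pt) =
          Module.finrank F (Y.obj pt) + Module.finrank F (Z.obj pt) := by
        have e1 : R.obj pt ≅ ModuleCat.of F (Y.obj pt × Z.obj pt) :=
          ((evaluation (SingleObj M) (ModuleCat.{0} F)).obj pt).mapIso e ≪≫
            Functor.mapBiprod ((evaluation (SingleObj M) (ModuleCat.{0} F)).obj pt) Y Z ≪≫
            ModuleCat.biprodIsoProd _ _
        rw [LinearEquiv.finrank_eq e1.toLinearEquiv]
        exact Module.finrank_prod
      -- positivity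
      have hpos : ∀ (W : SingleObj M ⥤ ModuleCat.{0} F), ¬ IsZero W →
          FiniteDimensional F (W.obj pt) → 0 < Module.finrank F (W.obj pt) := by
        intro W hW _
        rw [Module.finrank_pos_iff]
        rw [← not_subsingleton_iff_nontrivial]
        intro hs
        exact hW ((Functor.isZero_iff W).2 fun x => by
          obtain ⟨⟩ := x; exact @ModuleCat.isZero_of_subsingleton F _ (W.obj pt) hs)
      have hposY := hpos Y hYnz hfdY
      have hposZ := hpos Z hZnz hfdZ
      -- summand witnesses
      obtain ⟨N, R', ⟨w⟩⟩ := hw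
      have wY : ∃ (N : SingleObj M ⥤ Type 0) (R'' : SingleObj M ⥤ ModuleCat.{0} F),
          Nonempty (Y ⊞ R'' ≅ N ⋙ ModuleCat.free F) :=
        ⟨N, Z ⊞ R', ⟨(biprod.associator Y Z R').symm ≪≫
          biprod.mapIso e.symm (Iso.refl R') ≪≫ w⟩⟩
      have wZ : ∃ (N : SingleObj M ⥤ Type 0) (R'' : SingleObj M ⥤ ModuleCat.{0} F),
          Nonempty (Z ⊞ R'' ≅ N ⋙ ModuleCat.free F) :=
        ⟨N, Y ⊞ R', ⟨(biprod.associator Z Y R').symm ≪≫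
          biprod.mapIso ((biprod.braiding Z Y) ≪≫ e.symm) (Iso.refl R') ≪≫ w⟩⟩
      have hY := ih Y hfdY (by omega) wY m
      have hZ := ih Z hfdZ (by omega) wZ m
      have hYZ := biprod_map_eq_id Y Z m hY hZ
      have hn := e.hom.naturality (SingleObj.toEnd M m)
      rw [hYZ, Category.comp_id] at hn
      calc R.map (SingleObj.toEnd M m)
          = (R.map (SingleObj.toEnd M m) ≫ e.hom.app pt) ≫ e.inv.app pt := by
            rw [Category.assoc, Iso.hom_inv_id_app, Category.comp_id]
        _ = 𝟙 _ := by rw [hn]; simp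

end Stmt15Aux

/-- Let `M` be a finite monoid, regarded as a one-object category. If every
indecomposable finite-dimensional representation of this category over a field `F` that is a
direct summand of `free(N)` for some representation `N` in sets is an indicator representation
(zero, or the one-dimensional representation on which `M` acts by the identity, i.e. the
constant representation with value `F`), then `M` is trivial. -/
theorem stmt15 (M : Type) [Monoid M] [Fintype M] (F : Type) [Field F]
    (h : ∀ R : SingleObj M ⥤ ModuleCat.{0} F,
      (∀ x, FiniteDimensional F (R.obj x)) →
      CategoryTheory.Indecomposable R →
      (∃ (N : SingleObj M ⥤ Type 0) (R' : SingleObj M ⥤ ModuleCat.{0} F),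
        Nonempty (R ⊞ R' ≅ N ⋙ ModuleCat.free F)) →
      (IsZero R ∨
        Nonempty (R ≅ (Functor.const (SingleObj M)).obj (ModuleCat.of F F)))) :
    ∀ m : M, m = 1 := by
  intro m
  have hfd : FiniteDimensional F ((Stmt15Aux.reg M ⋙ ModuleCat.free F).obj Stmt15Aux.pt) :=
    inferInstanceAs (FiniteDimensional F (M →₀ F))
  have hw : ∃ (N : SingleObj M ⥤ Type 0) (R' : SingleObj M ⥤ ModuleCat.{0} F),
      Nonempty ((Stmt15Aux.reg M ⋙ ModuleCat.free F) ⊞ R' ≅ N ⋙ ModuleCat.free F) :=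
    ⟨Stmt15Aux.reg M, (Functor.const (SingleObj M)).obj (ModuleCat.of F PUnit),
      ⟨biprod.braiding _ _ ≪≫ (isoZeroBiprod ((Functor.isZero_iff _).2
        fun _ => ModuleCat.isZero_of_subsingleton (ModuleCat.of F PUnit))).symm⟩⟩
  have hm := Stmt15Aux.key h
    (Module.finrank F ((Stmt15Aux.reg M ⋙ ModuleCat.free F).obj Stmt15Aux.pt))
    (Stmt15Aux.reg M ⋙ ModuleCat.free F) hfd le_rfl hw m
  have happ := ConcreteCategory.congr_hom hm (Finsupp.single (1 : M) (1 : F))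
  have hlhs : ((Stmt15Aux.reg M ⋙ ModuleCat.free F).map (SingleObj.toEnd M m))
      (Finsupp.single (1 : M) (1 : F)) = Finsupp.single m (1 : F) := by
    show Finsupp.mapDomain (fun n => m * n) (Finsupp.single 1 1) = Finsupp.single m 1
    rw [Finsupp.mapDomain_single, mul_one]
  replace happ := hlhs.symm.trans happ
  have : Finsupp.single m (1 : F) = Finsupp.single 1 1 := happ
  exact Finsupp.single_left_injective one_ne_zero this
end
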